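/- Let δ be a symbolic 3-dissimilarity on X that is representable by a labelled level-1 network. Then δ satisfies Property (P3): any two δ-tricycles in the same connected component of C(δ) have the same δ-value on their leaf sets. -/

import Mathlib

/-- A rooted phylogenetic network on leaf set `X`: a rooted DAG whose leaves are
identified with `X`, with no vertex of indegree one and outdegree one. -/
structure PhyloNetwork (X : Type) [Fintype X] [DecidableEq X] where
  V : Type
  [instFin : Fintype V]
  [instDec : DecidableEq V]
  adj : V → V → Prop
  root : V
  leaf : X → V
  acyclic : ∀ v : V, ¬ Relation.TransGen adj v v
  root_no_in : ∀ u : V, ¬ adj u root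
  connected : ∀ v : V, Relation.ReflTransGen adj root v
  leaf_inj : Function.Injective leaf
  leaf_no_out : ∀ (x : X) (w : V), ¬ adj (leaf x) w
  leaves_only : ∀ v : V, (∀ w : V, ¬ adj v w) → v = root ∨ ∃ x, leaf x = v
  no_inout_one : ∀ v : V, ¬ ((∃! u : V, adj u v) ∧ (∃! w : V, adj v w))

namespace PhyloNetwork

variable {X : Type} [Fintype X] [DecidableEq X]

/-- Reachability by a directed path. -/
def reaches (N : PhyloNetwork X) : N.V → N.V → Prop := Relation.ReflTransGen N.adj

/-- The offspring set of a vertex: all leaves below it. -/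
def F (N : PhyloNetwork X) (v : N.V) : Set X := {x | N.reaches v (N.leaf x)}

/-- `v` is a leaf vertex. -/
def IsLeafV (N : PhyloNetwork X) (v : N.V) : Prop := ∃ x, N.leaf x = v

/-- `v` is a lowest common ancestor of the set `Y` of leaves. -/
def IsLca (N : PhyloNetwork X) (Y : Finset X) (v : N.V) : Prop :=
  (∀ x ∈ Y, x ∈ N.F v) ∧ ∀ w : N.V, N.adj v w → ¬ (∀ x ∈ Y, x ∈ N.F w)

/-- A cycle of a (level-1) network: two edge-disjoint, internally vertex-disjoint
directed paths from a root `r` to a hybrid `h`, with at least 3 vertices in total.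
`side1` and `side2` list the internal vertices of the two sides in order. -/
structure NCycle (N : PhyloNetwork X) where
  r : N.V
  h : N.V
  side1 : List N.V
  side2 : List N.V
  chain1 : List.Chain N.adj r (side1 ++ [h])
  chain2 : List.Chain N.adj r (side2 ++ [h])
  ne : r ≠ h
  nodup1 : (r :: (side1 ++ [h])).Nodup
  nodup2 : (r :: (side2 ++ [h])).Nodup
  disj : ∀ v ∈ side1, v ∉ side2
  nontriv : side1 ≠ [] ∨ side2 ≠ []

/-- The vertex set of a cycle. -/
def NCycle.verts {N : PhyloNetwork X} (C : NCycle N) : Set N.V :=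
  {C.r, C.h} ∪ {v | v ∈ C.side1} ∪ {v | v ∈ C.side2}

/-- A level-1 network: every vertex belongs to at most one cycle. -/
def IsLevelOne (N : PhyloNetwork X) : Prop :=
  ∀ C C' : NCycle N, ∀ v : N.V, v ∈ C.verts → v ∈ C'.verts → C.verts = C'.verts

/-- `R(C)`: the leaves below the root of the cycle `C`. -/
def NCycle.RC {N : PhyloNetwork X} (C : NCycle N) : Set X := N.F C.r

/-- `H(C)`: the leaves below the hybrid of the cycle `C`. -/
def NCycle.HC {N : PhyloNetwork X} (C : NCycle N) : Set X := N.F C.h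

/-- `v` is the last ancestor `v_C(x)` of the leaf `x` lying in the cycle `C`. -/
def NCycle.LastAnc {N : PhyloNetwork X} (C : NCycle N) (v : N.V) (x : X) : Prop :=
  v ∈ C.verts ∧ N.reaches v (N.leaf x) ∧
    ∀ w ∈ C.verts, N.reaches w (N.leaf x) → N.reaches w v

end PhyloNetwork

/-- A symbolic 3-dissimilarity on `X` with values in `M ∪ {⊙}` (`⊙` = `none`):
singletons get `⊙`, sets of size 2 or 3 get values in `M`. -/
structure SymbolicDissim3 (X M : Type) [DecidableEq X] where
  val : Finset X → Option M
  singleton_none : ∀ A : Finset X, A.card = 1 → val A = none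
  pair_some : ∀ A : Finset X, A.card = 2 ∨ A.card = 3 → val A ≠ none

/-- The labelled network `(N,t)` represents `δ`: for every `Y ⊆ X` of size 2 or 3,
`δ(Y) = t(lca_N(Y))`. -/
def PhyloNetwork.Represents {X M : Type} [Fintype X] [DecidableEq X]
    (N : PhyloNetwork X) (t : N.V → M) (d : SymbolicDissim3 X M) : Prop :=
  ∀ Y : Finset X, Y.card = 2 ∨ Y.card = 3 → ∀ v : N.V, N.IsLca Y v → d.val Y = some (t v)

/-- `δ` is level-1 representable. -/
def SymbolicDissim3.LevelOneRepresentable {X M : Type} [Fintype X] [DecidableEq X]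
    (d : SymbolicDissim3 X M) : Prop :=
  ∃ (N : PhyloNetwork X) (t : N.V → M), N.IsLevelOne ∧ N.Represents t d

/-- `x||yz` is a `δ`-tricycle: `δ(x,y,z) = δ(y,z)` and either the three pairwise
values are pairwise distinct, or `δ(x,y) = δ(x,z) ≠ δ(y,z)`. -/
def SymbolicDissim3.IsTricycle {X M : Type} [DecidableEq X] [DecidableEq M]
    (d : SymbolicDissim3 X M) (x y z : X) : Prop :=
  x ≠ y ∧ x ≠ z ∧ y ≠ z ∧ d.val {x, y, z} = d.val {y, z} ∧
    ((({d.val {x, y}, d.val {x, z}, d.val {y, z}} : Finset (Option M)).card = 3) ∨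
      (d.val {x, y} = d.val {x, z} ∧ d.val {x, y} ≠ d.val {y, z}))

/-- A `δ`-tricycle, i.e. a vertex of the graph `C(δ)`. -/
structure SymbolicDissim3.Tricyc {X M : Type} [DecidableEq X] [DecidableEq M]
    (d : SymbolicDissim3 X M) where
  x : X
  y : X
  z : X
  isTricycle : d.IsTricycle x y z

/-- The leaf set `L(τ)` of a `δ`-tricycle. -/
def SymbolicDissim3.Tricyc.leaves {X M : Type} [DecidableEq X] [DecidableEq M]
    {d : SymbolicDissim3 X M} (τ : d.Tricyc) : Finset X := {τ.x, τ.y, τ.z}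

/-- Adjacency in the graph `C(δ)`: two `δ`-tricycles are adjacent iff their
leaf sets share exactly two elements. -/
def SymbolicDissim3.tricycAdj {X M : Type} [DecidableEq X] [DecidableEq M]
    (d : SymbolicDissim3 X M) (τ τ' : d.Tricyc) : Prop :=
  (τ.leaves ∩ τ'.leaves).card = 2

/-- Property (P3): `δ`-tricycles in the same connected component of `C(δ)` have
the same `δ`-value on their leaf sets. -/
def SymbolicDissim3.PropP3 {X M : Type} [DecidableEq X] [DecidableEq M]
    (d : SymbolicDissim3 X M) : Prop :=
  ∀ τ τ' : d.Tricyc, Relation.ReflTransGen d.tricycAdj τ τ' →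
    d.val τ.leaves = d.val τ'.leaves


open Relation List

namespace PhyloNetwork

attribute [local instance] PhyloNetwork.instFin PhyloNetwork.instDec

variable {X : Type} [Fintype X] [DecidableEq X] {N : PhyloNetwork X}

theorem reaches_refl (v : N.V) : N.reaches v v := ReflTransGen.refl

theorem reaches_trans {a b c : N.V} (h1 : N.reaches a b) (h2 : N.reaches b c) :
    N.reaches a c := ReflTransGen.trans h1 h2

theorem adj_reaches {a b : N.V} (h : N.adj a b) : N.reaches a b := ReflTransGen.single h

theorem reaches_antisymm {a b : N.V} (h1 : N.reaches a b) (h2 : N.reaches b a) : a = b := by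
  by_contra hne
  rcases (reflTransGen_iff_eq_or_transGen.1 h1) with rfl | h1'
  · exact hne rfl
  · exact N.acyclic a (TransGen.trans_left h1' h2)

theorem F_mono {a b : N.V} (h : N.reaches a b) : N.F b ⊆ N.F a := by
  intro x hx; exact reaches_trans h hx

theorem not_adj_self (v : N.V) : ¬ N.adj v v := fun h => N.acyclic v (TransGen.single h)

/-- Well-foundedness of descending (child) order. -/
theorem wf_down : WellFounded (fun a b : N.V => N.adj b a) := by
  have : ∀ a : N.V, ¬ Relation.TransGen (fun a b : N.V => N.adj b a) a a := by
    intro a ha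
    exact N.acyclic a ((Relation.transGen_swap).1 ha)
  have hir := this
  haveI : IsTrans N.V (Relation.TransGen fun a b : N.V => N.adj b a) :=
    ⟨fun _ _ _ h1 h2 => h1.trans h2⟩
  haveI : IsIrrefl N.V (Relation.TransGen fun a b : N.V => N.adj b a) := ⟨fun a h => hir a h⟩
  exact Subrelation.wf (r := Relation.TransGen fun a b : N.V => N.adj b a) (fun h => TransGen.single h)
    (Finite.wellFounded_of_trans_of_irrefl (Relation.TransGen fun a b : N.V => N.adj b a))
  
/-- Well-foundedness of ancestor order: recurse from a vertex to its strict ancestors. -/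
theorem wf_up : WellFounded (fun a b : N.V => Relation.TransGen N.adj a b) := by
  haveI : IsTrans N.V (fun a b : N.V => Relation.TransGen N.adj a b) :=
    ⟨fun _ _ _ h1 h2 => h1.trans h2⟩
  haveI : IsIrrefl N.V (fun a b : N.V => Relation.TransGen N.adj a b) := ⟨fun a h => N.acyclic a h⟩
  exact Finite.wellFounded_of_trans_of_irrefl _

/-- Existence of an lca below any vertex covering `Y`. -/
theorem exists_lca_below (Y : Finset X) :
    ∀ v : N.V, (∀ x ∈ Y, x ∈ N.F v) → ∃ u, N.reaches v u ∧ N.IsLca Y u := by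
  intro v
  induction v using (wf_down (N := N)).induction with
  | _ v ih =>
    intro hv
    by_cases h : ∃ w, N.adj v w ∧ ∀ x ∈ Y, x ∈ N.F w
    · rcases h with ⟨w, hw, hcov⟩
      rcases ih w hw hcov with ⟨u, hu1, hu2⟩
      exact ⟨u, (adj_reaches hw).trans hu1, hu2⟩
    · push_neg at h
      refine ⟨v, reaches_refl v, hv, fun w hw hcov => ?_⟩
      rcases h w hw with ⟨x, hx1, hx2⟩
      exact hx2 (hcov x hx1)

theorem exists_lca (Y : Finset X) : ∃ u, N.IsLca Y u := by
  rcases exists_lca_below Y N.root (fun x _ => N.connected _) with ⟨u, _, hu⟩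
  exact ⟨u, hu⟩

/-- No strict descendant of an lca covers `Y`. -/
theorem lca_descendant {Y : Finset X} {v u : N.V} (hv : N.IsLca Y v)
    (hr : N.reaches v u) (hcov : ∀ x ∈ Y, x ∈ N.F u) : u = v := by
  rcases (reflTransGen_iff_eq_or_transGen.1 hr) with rfl | h
  · rfl
  · rcases (Relation.TransGen.head'_iff.1 h) with ⟨c, hc, hcu⟩
    exact absurd (fun x hx => F_mono hcu (hcov x hx)) (hv.2 c hc)

end PhyloNetwork

section Diamond

variable {α : Type} {R : α → α → Prop}

theorem chain_reach {a b : α} {l : List α} (hc : List.Chain R a l) (hb : b ∈ l) :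
    Relation.ReflTransGen R a b := by
  induction l generalizing a with
  | nil => simp at hb
  | cons c l ih =>
    rcases List.chain_cons.1 hc with ⟨hac, hcl⟩
    rcases List.mem_cons.1 hb with rfl | hb'
    · exact ReflTransGen.single hac
    · exact (ReflTransGen.single hac).trans (ih hcl hb')

theorem chain_reach' {a b : α} {l : List α} (hc : List.Chain R a l) (hb : b ∈ a :: l) :
    Relation.ReflTransGen R a b := by
  rcases List.mem_cons.1 hb with rfl | hb'
  · exact ReflTransGen.refl
  · exact chain_reach hc hb'

theorem chain_nodup (hacyc : ∀ a : α, ¬ Relation.TransGen R a a) :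
    ∀ {a : α} {l : List α}, List.Chain R a l → (a :: l).Nodup := by
  intro a l
  induction l generalizing a with
  | nil => simp
  | cons c l ih =>
    intro hc
    rcases List.chain_cons.1 hc with ⟨hac, hcl⟩
    have hnd := ih hcl
    refine List.nodup_cons.2 ⟨?_, hnd⟩
    intro hmem
    exact hacyc a ((Relation.TransGen.single hac).trans_left (chain_reach' hcl hmem))

theorem path_of_rtg {a b : α} (h : Relation.ReflTransGen R a b) :
    ∃ l : List α, List.Chain R a l ∧ b ∈ (a :: l) ∧ ∀ u ∈ (a :: l), Relation.ReflTransGen R u b := by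
  induction h using Relation.ReflTransGen.head_induction_on with
  | refl =>
    refine ⟨[], List.Chain.nil, by simp, ?_⟩
    intro u hu
    have : u = b := by simpa using hu
    subst this; exact ReflTransGen.refl
  | head hac _ ih =>
    rename_i a' c _
    rcases ih with ⟨l, hc, hb, hall⟩
    refine ⟨c :: l, List.chain_cons.2 ⟨hac, hc⟩, by simp [List.mem_cons.1 hb], ?_⟩
    intro u hu
    rcases List.mem_cons.1 hu with rfl | hu'
    · exact (ReflTransGen.single hac).trans (hall c (by simp))
    · exact hall u hu'

theorem first_split {l : List α} {P : α → Prop} (hl : ∃ b ∈ l, P b) :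
    ∃ pre b post, l = pre ++ b :: post ∧ P b ∧ ∀ u ∈ pre, ¬ P u := by
  classical
  induction l with
  | nil => simp at hl
  | cons c l ih =>
    by_cases hc : P c
    · exact ⟨[], c, l, rfl, hc, by simp⟩
    · have : ∃ b ∈ l, P b := by
        rcases hl with ⟨b, hb, hPb⟩
        rcases List.mem_cons.1 hb with rfl | hb'
        · exact absurd hPb hc
        · exact ⟨b, hb', hPb⟩
      rcases ih this with ⟨pre, b, post, rfl, hPb, hpre⟩
      refine ⟨c :: pre, b, post, rfl, hPb, ?_⟩
      intro u hu
      rcases List.mem_cons.1 hu with rfl | hu'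
      · exact hc
      · exact hpre u hu'

theorem abs_diamond [DecidableEq α] (hacyc : ∀ a : α, ¬ Relation.TransGen R a a)
    {v c1 c2 e : α}
    (h1 : R v c1) (h2 : R v c2) (hne : c1 ≠ c2)
    (r1 : Relation.ReflTransGen R c1 e) (r2 : Relation.ReflTransGen R c2 e) :
    ∃ (h : α) (s1 s2 : List α),
      List.Chain R v (s1 ++ [h]) ∧ List.Chain R v (s2 ++ [h]) ∧ v ≠ h ∧
      (v :: (s1 ++ [h])).Nodup ∧ (v :: (s2 ++ [h])).Nodup ∧
      (∀ u ∈ s1, u ∉ s2) ∧ (s1 ≠ [] ∨ s2 ≠ []) ∧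
      Relation.ReflTransGen R c1 h ∧ Relation.ReflTransGen R c2 h ∧
      Relation.ReflTransGen R h e ∧
      (c1 ∈ s1 ∨ c1 = h) ∧ (c2 ∈ s2 ∨ c2 = h) ∧
      (∀ u ∈ s1, Relation.ReflTransGen R c1 u) ∧ (∀ u ∈ s2, Relation.ReflTransGen R c2 u) := by
  classical
  rcases path_of_rtg r1 with ⟨l1, hc1, he1, hall1⟩
  rcases path_of_rtg r2 with ⟨l2, hc2, he2, hall2⟩
  have hPchain1 : List.Chain R v (c1 :: l1) := List.chain_cons.2 ⟨h1, hc1⟩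
  have hPchain2 : List.Chain R v (c2 :: l2) := List.chain_cons.2 ⟨h2, hc2⟩
  have hnd1 : (v :: (c1 :: l1)).Nodup := chain_nodup hacyc hPchain1
  have hnd2 : (v :: (c2 :: l2)).Nodup := chain_nodup hacyc hPchain2
  have hfirst : ∃ b ∈ (c2 :: l2), b ∈ (c1 :: l1) := ⟨e, he2, he1⟩
  rcases first_split hfirst with ⟨pre2, b, post2, hQsplit, hbS1, hpre2⟩
  rcases List.append_of_mem hbS1 with ⟨pre1, post1, hSsplit⟩
  refine ⟨b, pre1, pre2, ?_, ?_, ?_, ?_, ?_, ?_, ?_, ?_, ?_, ?_, ?_, ?_, ?_, ?_⟩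
  · exact ((List.isChain_cons_split (R := R) (a := v) (l₁ := pre1) (c := b) (l₂ := post1)).1 (hSsplit ▸ hPchain1)).1
  · exact ((List.isChain_cons_split (R := R) (a := v) (l₁ := pre2) (c := b) (l₂ := post2)).1 (hQsplit ▸ hPchain2)).1
  · intro hvb
    exact (List.nodup_cons.1 hnd1).1 (hvb ▸ hbS1)
  · refine List.Nodup.sublist ?_ (hSsplit ▸ hnd1)
    exact List.Sublist.cons₂ v (List.Sublist.append_left (by simp) pre1)
  · refine List.Nodup.sublist ?_ (hQsplit ▸ hnd2)
    exact List.Sublist.cons₂ v (List.Sublist.append_left (by simp) pre2)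
  · intro u hu hu2
    exact hpre2 u hu2 (hSsplit ▸ (by simp [hu] : u ∈ pre1 ++ b :: post1))
  · rcases ehh : pre1 with _ | _
    · right
      rcases ehh2 : pre2 with _ | _
      · exfalso
        apply hne
        have e1 : c1 = b := by
          have := hSsplit; rw [ehh] at this; simpa using (List.cons_eq_cons.1 (by simpa using this)).1
        have e2 : c2 = b := by
          have := hQsplit; rw [ehh2] at this; simpa using (List.cons_eq_cons.1 (by simpa using this)).1
        rw [e1, e2]
      · simp
    · left; simp
  · exact chain_reach' hc1 hbS1
  · exact chain_reach' hc2 (hQsplit ▸ (by simp : b ∈ pre2 ++ b :: post2))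
  · exact hall1 b hbS1
  · rcases ehh : pre1 with _ | ⟨p, pre1'⟩
    · right
      have := hSsplit; rw [ehh] at this
      exact ((List.cons_eq_cons.1 (by simpa using this)).1)
    · left
      have := hSsplit; rw [ehh] at this
      have : c1 = p := (List.cons_eq_cons.1 (by simpa using this)).1
      simp [this]
  · rcases ehh : pre2 with _ | ⟨p, pre2'⟩
    · right
      have := hQsplit; rw [ehh] at this
      exact ((List.cons_eq_cons.1 (by simpa using this)).1)
    · left
      have := hQsplit; rw [ehh] at this
      have : c2 = p := (List.cons_eq_cons.1 (by simpa using this)).1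
      simp [this]
  · intro u hu
    exact chain_reach' hc1 (hSsplit ▸ (by simp [hu] : u ∈ pre1 ++ b :: post1))
  · intro u hu
    exact chain_reach' hc2 (hQsplit ▸ (by simp [hu] : u ∈ pre2 ++ b :: post2))

end Diamond

namespace PhyloNetwork

variable {X : Type} [Fintype X] [DecidableEq X] {N : PhyloNetwork X}

attribute [local instance] PhyloNetwork.instDec

theorem mem_verts_iff {C : NCycle N} {u : N.V} :
    u ∈ C.verts ↔ u = C.r ∨ u = C.h ∨ u ∈ C.side1 ∨ u ∈ C.side2 := by
  simp [NCycle.verts, Set.mem_union, Set.mem_insert_iff, or_assoc]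

theorem r_mem_verts (C : NCycle N) : C.r ∈ C.verts := mem_verts_iff.2 (Or.inl rfl)
theorem h_mem_verts (C : NCycle N) : C.h ∈ C.verts := mem_verts_iff.2 (Or.inr (Or.inl rfl))

theorem chain_reach_last {α : Type} {R : α → α → Prop} :
    ∀ {a b : α} {l : List α}, List.Chain R a (l ++ [b]) → ∀ u ∈ a :: l, Relation.ReflTransGen R u b := by
  intro a b l
  induction l generalizing a with
  | nil =>
    intro hc u hu
    have : u = a := by simpa using hu
    subst this
    exact Relation.ReflTransGen.single (by simpa using List.chain_cons.1 hc |>.1)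
  | cons c l ih =>
    intro hc u hu
    rcases List.chain_cons.1 hc with ⟨hac, hcl⟩
    rcases List.mem_cons.1 hu with rfl | hu'
    · exact (Relation.ReflTransGen.single hac).trans (ih hcl c (by simp))
    · exact ih hcl u hu'

/-- The root of a cycle reaches every vertex of the cycle. -/
theorem r_reaches {C : NCycle N} {u : N.V} (hu : u ∈ C.verts) : N.reaches C.r u := by
  rcases mem_verts_iff.1 hu with rfl | rfl | h1 | h2
  · exact reaches_refl _
  · exact chain_reach C.chain1 (by simp)
  · exact chain_reach C.chain1 (by simp [h1])
  · exact chain_reach C.chain2 (by simp [h2])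

/-- Every vertex of a cycle reaches the hybrid. -/
theorem reaches_h {C : NCycle N} {u : N.V} (hu : u ∈ C.verts) : N.reaches u C.h := by
  rcases mem_verts_iff.1 hu with rfl | rfl | h1 | h2
  · exact chain_reach C.chain1 (by simp)
  · exact reaches_refl _
  · exact chain_reach_last C.chain1 u (by simp [h1])
  · exact chain_reach_last C.chain2 u (by simp [h2])

/-- Two cycles sharing a vertex (in a level-1 network) have the same root and hybrid. -/
theorem shared_vertex_eq (hlv : N.IsLevelOne) {C C' : NCycle N} {u : N.V}
    (h1 : u ∈ C.verts) (h2 : u ∈ C'.verts) :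
    C.verts = C'.verts ∧ C.r = C'.r ∧ C.h = C'.h := by
  have hv : C.verts = C'.verts := hlv C C' u h1 h2
  constructor
  · exact hv
  constructor
  · have h1 : N.reaches C.r C'.r := r_reaches (by rw [hv]; exact r_mem_verts C')
    have h2 : N.reaches C'.r C.r := r_reaches (C := C') (by rw [← hv]; exact r_mem_verts C)
    exact reaches_antisymm h1 h2
  · have h1 : N.reaches C.h C'.h := reaches_h (C := C') (by rw [← hv]; exact h_mem_verts C)
    have h2 : N.reaches C'.h C.h := reaches_h (C := C) (by rw [hv]; exact h_mem_verts C')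
    exact reaches_antisymm h1 h2

/-- Downward diamond: two distinct children of `v` with a common descendant yield a
cycle rooted at `v`. -/
theorem cycleD {v c1 c2 e : N.V} (h1 : N.adj v c1) (h2 : N.adj v c2) (hne : c1 ≠ c2)
    (r1 : N.reaches c1 e) (r2 : N.reaches c2 e) :
    ∃ C : NCycle N, C.r = v ∧ N.reaches c1 C.h ∧ N.reaches c2 C.h ∧ N.reaches C.h e ∧
      c1 ∈ C.verts ∧ c2 ∈ C.verts ∧
      ∀ u ∈ C.verts, u = v ∨ N.reaches c1 u ∨ N.reaches c2 u := by
  rcases abs_diamond N.acyclic h1 h2 hne r1 r2 with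
    ⟨h, s1, s2, hc1, hc2, hvh, hnd1, hnd2, hdisj, hnt, hr1, hr2, hre, hm1, hm2, hcov1, hcov2⟩
  refine ⟨⟨v, h, s1, s2, hc1, hc2, hvh, hnd1, hnd2, hdisj, hnt⟩, rfl, hr1, hr2, hre, ?_, ?_, ?_⟩
  · rcases hm1 with h' | h'
    · exact mem_verts_iff.2 (Or.inr (Or.inr (Or.inl h')))
    · exact mem_verts_iff.2 (Or.inr (Or.inl h'))
  · rcases hm2 with h' | h'
    · exact mem_verts_iff.2 (Or.inr (Or.inr (Or.inr h')))
    · exact mem_verts_iff.2 (Or.inr (Or.inl h'))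
  · intro u hu
    rcases mem_verts_iff.1 hu with rfl | rfl | hu1 | hu2
    · exact Or.inl rfl
    · exact Or.inr (Or.inl hr1)
    · exact Or.inr (Or.inl (hcov1 u hu1))
    · exact Or.inr (Or.inr (hcov2 u hu2))

/-- Upward diamond: two distinct parents of `b` yield a cycle with hybrid `b`. -/
theorem cycleU {b p1 p2 : N.V} (h1 : N.adj p1 b) (h2 : N.adj p2 b) (hne : p1 ≠ p2) :
    ∃ C : NCycle N, C.h = b ∧ p1 ∈ C.verts ∧ p2 ∈ C.verts ∧
      ∀ u ∈ C.verts, u = b ∨ N.reaches u p1 ∨ N.reaches u p2 := by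
  have hacyc : ∀ a : N.V, ¬ Relation.TransGen (fun a b : N.V => N.adj b a) a a := by
    intro a ha
    exact N.acyclic a ((Relation.transGen_swap).1 ha)
  have r1 : Relation.ReflTransGen (fun a b : N.V => N.adj b a) p1 N.root :=
    (Relation.reflTransGen_swap).2 (N.connected p1)
  have r2 : Relation.ReflTransGen (fun a b : N.V => N.adj b a) p2 N.root :=
    (Relation.reflTransGen_swap).2 (N.connected p2)
  rcases abs_diamond hacyc h1 h2 hne r1 r2 with
    ⟨m, s1, s2, hc1, hc2, hvh, hnd1, hnd2, hdisj, hnt, hr1, hr2, _, hm1, hm2, hcov1, hcov2⟩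
  have conv : ∀ (s : List N.V), List.Chain (fun a b : N.V => N.adj b a) b (s ++ [m]) →
      List.Chain N.adj m (s.reverse ++ [b]) := by
    intro s hc
    have : List.Chain' (fun a b : N.V => N.adj b a) (b :: (s ++ [m])) := hc
    have h2 : List.Chain' N.adj ((b :: (s ++ [m])).reverse) := by
      refine List.isChain_reverse.2 ?_
      exact this
    have heq : (b :: (s ++ [m])).reverse = m :: (s.reverse ++ [b]) := by simp
    rw [heq] at h2
    exact h2
  have ndconv : ∀ (s : List N.V), (b :: (s ++ [m])).Nodup → (m :: (s.reverse ++ [b])).Nodup := by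
    intro s hs
    have : (b :: (s ++ [m])).reverse.Nodup := List.nodup_reverse.2 hs
    have heq : (b :: (s ++ [m])).reverse = m :: (s.reverse ++ [b]) := by simp
    rwa [heq] at this
  refine ⟨⟨m, b, s1.reverse, s2.reverse, conv s1 hc1, conv s2 hc2, fun h => hvh h.symm,
    ndconv s1 hnd1, ndconv s2 hnd2, ?_, ?_⟩, rfl, ?_, ?_, ?_⟩
  · intro u hu hu2
    exact hdisj u (List.mem_reverse.1 hu) (List.mem_reverse.1 hu2)
  · rcases hnt with h | h
    · exact Or.inl (by simpa using h)
    · exact Or.inr (by simpa using h)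
  · rcases hm1 with h' | h'
    · exact mem_verts_iff.2 (Or.inr (Or.inr (Or.inl (List.mem_reverse.2 h'))))
    · exact mem_verts_iff.2 (Or.inl h')
  · rcases hm2 with h' | h'
    · exact mem_verts_iff.2 (Or.inr (Or.inr (Or.inr (List.mem_reverse.2 h'))))
    · exact mem_verts_iff.2 (Or.inl h')
  · intro u hu
    rcases mem_verts_iff.1 hu with rfl | rfl | hu1 | hu2
    · exact Or.inr (Or.inl ((Relation.reflTransGen_swap).1 hr1))
    · exact Or.inl rfl
    · exact Or.inr (Or.inl ((Relation.reflTransGen_swap).1 (hcov1 u (List.mem_reverse.1 hu1))))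
    · exact Or.inr (Or.inr ((Relation.reflTransGen_swap).1 (hcov2 u (List.mem_reverse.1 hu2))))

end PhyloNetwork

namespace PhyloNetwork

variable {X : Type} [Fintype X] [DecidableEq X] {N : PhyloNetwork X}

theorem chain_pred {α : Type} {R : α → α → Prop} :
    ∀ {a b : α} {l : List α}, List.Chain R a l → b ∈ l → ∃ p ∈ a :: l, R p b := by
  intro a b l
  induction l generalizing a with
  | nil => intro _ hb; simp at hb
  | cons c l ih =>
    intro hc hb
    rcases List.chain_cons.1 hc with ⟨hac, hcl⟩
    rcases List.mem_cons.1 hb with rfl | hb'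
    · exact ⟨a, by simp, hac⟩
    · rcases ih hcl hb' with ⟨p, hp, hpb⟩
      exact ⟨p, List.mem_cons_of_mem a hp, hpb⟩

theorem exists_pred_in_verts {C : NCycle N} {w : N.V} (hw : w ∈ C.verts) (hwr : w ≠ C.r) :
    ∃ p ∈ C.verts, N.adj p w := by
  have mem1 : ∀ {p : N.V}, p ∈ C.r :: (C.side1 ++ [C.h]) → p ∈ C.verts := by
    intro p hp
    rcases List.mem_cons.1 hp with rfl | hp'
    · exact r_mem_verts C
    · rcases List.mem_append.1 hp' with h | h
      · exact mem_verts_iff.2 (Or.inr (Or.inr (Or.inl h)))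
      · exact mem_verts_iff.2 (Or.inr (Or.inl (by simpa using h)))
  have mem2 : ∀ {p : N.V}, p ∈ C.r :: (C.side2 ++ [C.h]) → p ∈ C.verts := by
    intro p hp
    rcases List.mem_cons.1 hp with rfl | hp'
    · exact r_mem_verts C
    · rcases List.mem_append.1 hp' with h | h
      · exact mem_verts_iff.2 (Or.inr (Or.inr (Or.inr h)))
      · exact mem_verts_iff.2 (Or.inr (Or.inl (by simpa using h)))
  rcases mem_verts_iff.1 hw with rfl | rfl | h1 | h2
  · exact absurd rfl hwr
  · rcases chain_pred C.chain1 (b := C.h) (by simp) with ⟨p, hp, hpw⟩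
    exact ⟨p, mem1 hp, hpw⟩
  · rcases chain_pred C.chain1 (b := w) (by simp [h1]) with ⟨p, hp, hpw⟩
    exact ⟨p, mem1 hp, hpw⟩
  · rcases chain_pred C.chain2 (b := w) (by simp [h2]) with ⟨p, hp, hpw⟩
    exact ⟨p, mem2 hp, hpw⟩

/-- Entry lemma: a parent of a non-root cycle vertex lies in the cycle. -/
theorem entry (hlv : N.IsLevelOne) {C : NCycle N} {p w : N.V}
    (hp : N.adj p w) (hw : w ∈ C.verts) (hwr : w ≠ C.r) : p ∈ C.verts := by
  rcases exists_pred_in_verts hw hwr with ⟨q, hq, hqw⟩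
  by_cases hpq : p = q
  · exact hpq ▸ hq
  rcases cycleU hp hqw hpq with ⟨G, hGh, hpG, hqG, _⟩
  rcases shared_vertex_eq hlv hqG hq with ⟨hvEq, _, _⟩
  rw [← hvEq]
  exact hpG

/-- Blob lemma: the strict descendants of a hybrid are only entered from
below the hybrid. -/
theorem blob (hlv : N.IsLevelOne) {C : NCycle N} :
    ∀ b : N.V, N.reaches C.h b → b ≠ C.h → ∀ p : N.V, N.adj p b → N.reaches C.h p := by
  intro b
  induction b using (wf_up (N := N)).induction with
  | _ b ih =>
    intro hb hbne p hp
    have htg : Relation.TransGen N.adj C.h b := by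
      rcases reflTransGen_iff_eq_or_transGen.1 hb with rfl | h
      · exact absurd rfl hbne
      · exact h
    rcases (Relation.TransGen.tail'_iff.1 htg) with ⟨q, hq, hqb⟩
    by_cases hpq : p = q
    · exact hpq ▸ hq
    rcases cycleU hp hqb hpq with ⟨G, hGh, hpG, hqG, _⟩
    have hGC : ∀ u, u ∈ G.verts → u ∉ C.verts := by
      intro u hu hu'
      rcases shared_vertex_eq hlv hu hu' with ⟨_, _, hh⟩
      exact hbne (hGh ▸ hh)
    have inner : ∀ u : N.V, u ∈ G.verts → N.reaches C.h u → Relation.TransGen N.adj u b →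
        N.reaches C.h G.r := by
      intro u
      induction u using (wf_up (N := N)).induction with
      | _ u ih2 =>
        intro huG hhu hub
        by_cases hur : u = G.r
        · exact hur ▸ hhu
        rcases exists_pred_in_verts huG hur with ⟨q2, hq2G, hq2u⟩
        have huC : u ≠ C.h := by
          intro h
          exact hGC u huG (h ▸ h_mem_verts C)
        have hq2S : N.reaches C.h q2 := ih u hub hhu huC q2 hq2u
        exact ih2 q2 (Relation.TransGen.single hq2u) hq2G hq2S
          (Relation.TransGen.head hq2u hub)
    have hq2 : N.reaches C.h G.r := inner q hqG hq (Relation.TransGen.single hqb)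
    exact hq2.trans (r_reaches hpG)

/-- Position lemma: an ancestor of a descendant of the hybrid of `C` is below the
hybrid, in the cycle, or an ancestor of the root. -/
theorem position (hlv : N.IsLevelOne) {C : NCycle N} {b u : N.V}
    (hb : N.reaches C.h b) (hu : N.reaches u b) :
    N.reaches C.h u ∨ u ∈ C.verts ∨ N.reaches u C.r := by
  induction hu using Relation.ReflTransGen.head_induction_on with
  | refl => exact Or.inl hb
  | @head a c hadj hrest ih =>
    rcases ih with h | h | h
    · by_cases hc : c = C.h
      · subst hc
        exact Or.inr (Or.inl (entry hlv hadj (h_mem_verts C) (Ne.symm C.ne)))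
      · exact Or.inl (blob hlv c h hc a hadj)
    · by_cases hc : c = C.r
      · exact Or.inr (Or.inr (hc ▸ adj_reaches hadj))
      · exact Or.inr (Or.inl (entry hlv hadj h hc))
    · exact Or.inr (Or.inr ((adj_reaches hadj).trans h))

end PhyloNetwork

section Structure

open PhyloNetwork

variable {X M : Type} [Fintype X] [DecidableEq X] [DecidableEq M]
variable {N : PhyloNetwork X} {t : N.V → M} {d : SymbolicDissim3 X M}

theorem card_le_two {β : Type} [DecidableEq β] (a b : β) : ({a, b} : Finset β).card ≤ 2 := by
  refine le_trans (Finset.card_insert_le a {b}) ?_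
  simp

theorem three_distinct {β : Type} [DecidableEq β] {a b c : β}
    (h : ({a, b, c} : Finset β).card = 3) : a ≠ b ∧ a ≠ c ∧ b ≠ c := by
  refine ⟨?_, ?_, ?_⟩ <;> intro he <;> subst he
  · have he2 : ({a, a, c} : Finset β) = {a, c} := by ext u; simp
    rw [he2] at h
    have := card_le_two a c
    omega
  · have he2 : ({a, b, a} : Finset β) = {a, b} := by ext u; simp; tauto
    rw [he2] at h
    have := card_le_two a b
    omega
  · have he2 : ({a, b, b} : Finset β) = {a, b} := by ext u; simp
    rw [he2] at h
    have := card_le_two a b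
    omega

theorem tric_ne {x y z : X} (ht : d.IsTricycle x y z) :
    d.val {x, y} ≠ d.val {y, z} ∧ d.val {x, z} ≠ d.val {y, z} := by
  rcases ht.2.2.2.2 with h | ⟨h1, h2⟩
  · have h3 := three_distinct h
    exact ⟨h3.2.1, h3.2.2⟩
  · exact ⟨h2, h1 ▸ h2⟩

theorem pair_card {x y : X} (h : x ≠ y) : ({x, y} : Finset X).card = 2 := Finset.card_pair h

theorem triple_card {x y z : X} (hxy : x ≠ y) (hxz : x ≠ z) (hyz : y ≠ z) :
    ({x, y, z} : Finset X).card = 3 := by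
  rw [Finset.card_insert_of_notMem (by simp [hxy, hxz]), Finset.card_pair hyz]

end Structure

section TS

open PhyloNetwork Relation

variable {X M : Type} [Fintype X] [DecidableEq X] [DecidableEq M]
variable {N : PhyloNetwork X} {t : N.V → M} {d : SymbolicDissim3 X M}

attribute [local instance] PhyloNetwork.instDec
set_option linter.unusedSectionVars false

theorem not_lca_pair {x y z : X} (hrep : N.Represents t d) (ht : d.IsTricycle x y z)
    {v : N.V} (hv : N.IsLca {x, y, z} v) :
    ¬ N.IsLca {x, y} v ∧ ¬ N.IsLca {x, z} v := by
  obtain ⟨hxy, hxz, hyz, heq, -⟩ := id ht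
  have valT : d.val {x, y, z} = some (t v) :=
    hrep _ (Or.inr (triple_card hxy hxz hyz)) v hv
  constructor
  · intro h
    have valP : d.val {x, y} = some (t v) := hrep _ (Or.inl (pair_card hxy)) v h
    have vyz : d.val {y, z} = some (t v) := heq.symm.trans valT
    exact (tric_ne ht).1 (valP.trans vyz.symm)
  · intro h
    have valP : d.val {x, z} = some (t v) := hrep _ (Or.inl (pair_card hxz)) v h
    have vyz : d.val {y, z} = some (t v) := heq.symm.trans valT
    exact (tric_ne ht).2 (valP.trans vyz.symm)

/-- Structure of a tricycle at an lca of its triple. -/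
theorem tric_struct (hlv : N.IsLevelOne) (hrep : N.Represents t d)
    {x y z : X} (ht : d.IsTricycle x y z) {v : N.V} (hv : N.IsLca {x, y, z} v) :
    N.IsLca {y, z} v ∧ ∃ C : NCycle N, C.r = v ∧
      x ∈ N.F C.h ∧ y ∉ N.F C.h ∧ z ∉ N.F C.h := by
  obtain ⟨hxy, hxz, hyz, heq, -⟩ := id ht
  have hxv : x ∈ N.F v := hv.1 x (by simp)
  have hyv : y ∈ N.F v := hv.1 y (by simp)
  have hzv : z ∈ N.F v := hv.1 z (by simp)
  obtain ⟨hnl1, hnl2⟩ := not_lca_pair hrep ht hv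
  -- children covering {x,y} and {x,z}
  have hc1 : ∃ c, N.adj v c ∧ x ∈ N.F c ∧ y ∈ N.F c := by
    by_contra h
    push_neg at h
    refine hnl1 ⟨fun u hu => ?_, fun w hw hcov => ?_⟩
    · rcases Finset.mem_insert.1 hu with rfl | hu'
      · exact hxv
      · exact (Finset.mem_singleton.1 hu') ▸ hyv
    · exact (h w hw (hcov x (by simp))) (hcov y (by simp))
  have hc2 : ∃ c, N.adj v c ∧ x ∈ N.F c ∧ z ∈ N.F c := by
    by_contra h
    push_neg at h
    refine hnl2 ⟨fun u hu => ?_, fun w hw hcov => ?_⟩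
    · rcases Finset.mem_insert.1 hu with rfl | hu'
      · exact hxv
      · exact (Finset.mem_singleton.1 hu') ▸ hzv
    · exact (h w hw (hcov x (by simp))) (hcov z (by simp))
  obtain ⟨c1, hvc1, hxc1, hyc1⟩ := hc1
  obtain ⟨c2, hvc2, hxc2, hzc2⟩ := hc2
  have nocov : ∀ c, N.adj v c → ¬ (x ∈ N.F c ∧ y ∈ N.F c ∧ z ∈ N.F c) := by
    intro c hc ⟨h1, h2, h3⟩
    refine hv.2 c hc (fun u hu => ?_)
    rcases Finset.mem_insert.1 hu with rfl | hu'
    · exact h1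
    rcases Finset.mem_insert.1 hu' with rfl | hu''
    · exact h2
    · exact (Finset.mem_singleton.1 hu'') ▸ h3
  have hzc1 : z ∉ N.F c1 := fun h => nocov c1 hvc1 ⟨hxc1, hyc1, h⟩
  have hyc2 : y ∉ N.F c2 := fun h => nocov c2 hvc2 ⟨hxc2, h, hzc2⟩
  have hne12 : c1 ≠ c2 := fun h => hyc2 (h ▸ hyc1)
  -- the cycle through c1, c2 above x
  obtain ⟨C, hCr, hr1, hr2, hrx, hm1, hm2, hcov⟩ := cycleD hvc1 hvc2 hne12 hxc1 hxc2
  have hxh : x ∈ N.F C.h := hrx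
  have hyh : y ∉ N.F C.h := fun h => hyc2 (F_mono hr2 h)
  have hzh : z ∉ N.F C.h := fun h => hzc1 (F_mono hr1 h)
  refine ⟨?_, C, hCr, hxh, hyh, hzh⟩
  -- v is an lca of {y,z}
  by_contra h
  have hc3 : ∃ c, N.adj v c ∧ y ∈ N.F c ∧ z ∈ N.F c := by
    by_contra h'
    push_neg at h'
    refine h ⟨fun u hu => ?_, fun w hw hcov' => ?_⟩
    · rcases Finset.mem_insert.1 hu with rfl | hu'
      · exact hyv
      · exact (Finset.mem_singleton.1 hu') ▸ hzv
    · exact (h' w hw (hcov' y (by simp))) (hcov' z (by simp))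
  obtain ⟨c3, hvc3, hyc3, hzc3⟩ := hc3
  have hne13 : c1 ≠ c3 := fun he => hzc1 (he ▸ hzc3)
  obtain ⟨C13, hCr13, _, _, _, _, hm3, _⟩ := cycleD hvc1 hvc3 hne13 hyc1 hyc3
  have hvC : v ∈ C.verts := hCr ▸ r_mem_verts C
  have hvC13 : v ∈ C13.verts := hCr13 ▸ r_mem_verts C13
  obtain ⟨hveq, _, _⟩ := shared_vertex_eq hlv hvC13 hvC
  have hc3mem : c3 ∈ C.verts := hveq ▸ hm3
  rcases hcov c3 hc3mem with rfl | h' | h'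
  · exact not_adj_self _ hvc3
  · exact hzc1 (F_mono h' hzc3)
  · exact hyc2 (F_mono h' hyc3)

/-- Every lca of a pair separated through the hybrid of `C` lies on `C`. -/
theorem lca_pair_in_verts (hlv : N.IsLevelOne) {C : NCycle N} {a b : X}
    (ha : a ∈ N.F C.h) (hb : b ∉ N.F C.h)
    (hcova : a ∈ N.F C.r) (hcovb : b ∈ N.F C.r)
    (hnl : ¬ N.IsLca {a, b} C.r) :
    ∀ m : N.V, N.IsLca {a, b} m → m ∈ C.verts := by
  intro m hm
  have ham : a ∈ N.F m := hm.1 a (by simp)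
  have hbm : b ∈ N.F m := hm.1 b (by simp)
  rcases position hlv ha ham with h | h | h
  · exact absurd (F_mono h hbm) hb
  · exact h
  · rcases reflTransGen_iff_eq_or_transGen.1 h with rfl | htg
    · exact absurd hm hnl
    · rcases TransGen.head'_iff.1 htg with ⟨c, hc, hcr⟩
      exfalso
      refine hm.2 c hc (fun u hu => ?_)
      rcases Finset.mem_insert.1 hu with rfl | hu'
      · exact F_mono hcr hcova
      · exact (Finset.mem_singleton.1 hu') ▸ F_mono hcr hcovb

end TS

section Cores

open PhyloNetwork Relation

variable {X M : Type} [Fintype X] [DecidableEq X] [DecidableEq M]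
variable {N : PhyloNetwork X} {t : N.V → M} {d : SymbolicDissim3 X M}

set_option linter.unusedSectionVars false

theorem tric_swap {x y z : X} (ht : d.IsTricycle x y z) : d.IsTricycle x z y := by
  obtain ⟨hxy, hxz, hyz, heq, hbr⟩ := ht
  have e1 : ({x, z, y} : Finset X) = {x, y, z} := by ext u; simp; tauto
  have e2 : ({z, y} : Finset X) = {y, z} := Finset.pair_comm z y
  refine ⟨hxz, hxy, hyz.symm, by rw [e1, e2]; exact heq, ?_⟩
  rcases hbr with h | ⟨h1, h2⟩
  · left
    have e3 : ({d.val {x, z}, d.val {x, y}, d.val {z, y}} : Finset (Option M)) =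
        {d.val {x, y}, d.val {x, z}, d.val {y, z}} := by
      rw [e2]; ext u; simp; tauto
    rw [e3]; exact h
  · right
    exact ⟨h1.symm, by rw [e2, ← h1]; exact h2⟩

theorem core_A {a b c a' : X} (ht : d.IsTricycle a b c) (ht2 : d.IsTricycle a' b c) :
    d.val {a, b, c} = d.val {a', b, c} :=
  ht.2.2.2.1.trans ht2.2.2.2.1.symm

theorem core_B (hlv : N.IsLevelOne) (hrep : N.Represents t d) {a b c c' : X}
    (ht : d.IsTricycle a b c) (ht2 : d.IsTricycle a b c') :
    d.val {a, b, c} = d.val {a, b, c'} := by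
  obtain ⟨v, hv⟩ := exists_lca ({a, b, c} : Finset X) (N := N)
  obtain ⟨v', hv'⟩ := exists_lca ({a, b, c'} : Finset X) (N := N)
  obtain ⟨hvyz, C, hCr, hah, hbh, hch⟩ := tric_struct hlv hrep ht hv
  obtain ⟨hnl1, hnl2⟩ := not_lca_pair hrep ht hv
  obtain ⟨hvyz', C', hCr', hah', hbh', hch'⟩ := tric_struct hlv hrep ht2 hv'
  obtain ⟨hnl1', hnl2'⟩ := not_lca_pair hrep ht2 hv'
  obtain ⟨m, hm⟩ := exists_lca ({a, b} : Finset X) (N := N)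
  have hmC : m ∈ C.verts := by
    refine lca_pair_in_verts hlv hah hbh ?_ ?_ ?_ m hm
    · rw [hCr]; exact hv.1 a (by simp)
    · rw [hCr]; exact hv.1 b (by simp)
    · rw [hCr]; exact hnl1
  have hmC' : m ∈ C'.verts := by
    refine lca_pair_in_verts hlv hah' hbh' ?_ ?_ ?_ m hm
    · rw [hCr']; exact hv'.1 a (by simp)
    · rw [hCr']; exact hv'.1 b (by simp)
    · rw [hCr']; exact hnl1'
  obtain ⟨_, hreq, _⟩ := shared_vertex_eq hlv hmC hmC'
  have hvv : v = v' := by rw [← hCr, ← hCr', hreq]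
  have val1 : d.val {a, b, c} = some (t v) :=
    hrep _ (Or.inr (triple_card ht.1 ht.2.1 ht.2.2.1)) v hv
  have val2 : d.val {a, b, c'} = some (t v') :=
    hrep _ (Or.inr (triple_card ht2.1 ht2.2.1 ht2.2.2.1)) v' hv'
  rw [val1, val2, hvv]

/-- `a‖bc` and `b‖aw` cannot both be tricycles. -/
theorem core_C (hlv : N.IsLevelOne) (hrep : N.Represents t d) {a b c w : X}
    (ht : d.IsTricycle a b c) (ht2 : d.IsTricycle b a w) : False := by
  obtain ⟨v, hv⟩ := exists_lca ({a, b, c} : Finset X) (N := N)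
  obtain ⟨v', hv'⟩ := exists_lca ({b, a, w} : Finset X) (N := N)
  obtain ⟨hvyz, C, hCr, hah, hbh, hch⟩ := tric_struct hlv hrep ht hv
  obtain ⟨hnl1, hnl2⟩ := not_lca_pair hrep ht hv
  obtain ⟨hvyz', C', hCr', hbh', hah', hwh'⟩ := tric_struct hlv hrep ht2 hv'
  obtain ⟨hnl1', hnl2'⟩ := not_lca_pair hrep ht2 hv'
  obtain ⟨m, hm⟩ := exists_lca ({a, b} : Finset X) (N := N)
  have hmC : m ∈ C.verts := by
    refine lca_pair_in_verts hlv hah hbh ?_ ?_ ?_ m hm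
    · rw [hCr]; exact hv.1 a (by simp)
    · rw [hCr]; exact hv.1 b (by simp)
    · rw [hCr]; exact hnl1
  have hm2 : N.IsLca {b, a} m := by rwa [Finset.pair_comm b a]
  have hmC' : m ∈ C'.verts := by
    refine lca_pair_in_verts hlv hbh' hah' ?_ ?_ ?_ m hm2
    · rw [hCr']; exact hv'.1 b (by simp)
    · rw [hCr']; exact hv'.1 a (by simp)
    · rw [hCr']; exact hnl1'
  obtain ⟨_, _, hheq⟩ := shared_vertex_eq hlv hmC hmC'
  exact hah' (hheq ▸ hah)

/-- `a‖bc` and `b‖cw` cannot both be tricycles. -/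
theorem core_E (hlv : N.IsLevelOne) (hrep : N.Represents t d) {a b c w : X}
    (ht : d.IsTricycle a b c) (ht2 : d.IsTricycle b c w) : False := by
  obtain ⟨v, hv⟩ := exists_lca ({a, b, c} : Finset X) (N := N)
  obtain ⟨v', hv'⟩ := exists_lca ({b, c, w} : Finset X) (N := N)
  obtain ⟨hvyz, C, hCr, hah, hbh, hch⟩ := tric_struct hlv hrep ht hv
  obtain ⟨hvyz', C', hCr', hbh', hch', hwh'⟩ := tric_struct hlv hrep ht2 hv'
  obtain ⟨hnl1', hnl2'⟩ := not_lca_pair hrep ht2 hv'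
  have hvC' : v ∈ C'.verts := by
    refine lca_pair_in_verts hlv hbh' hch' ?_ ?_ ?_ v hvyz
    · rw [hCr']; exact hv'.1 b (by simp)
    · rw [hCr']; exact hv'.1 c (by simp)
    · rw [hCr']; exact hnl1'
  have hvC : v ∈ C.verts := hCr ▸ r_mem_verts C
  obtain ⟨_, _, hheq⟩ := shared_vertex_eq hlv hvC hvC'
  exact hbh (hheq ▸ hbh')

/-- `a‖bc` and `w‖ab` cannot both be tricycles. -/
theorem core_D (hlv : N.IsLevelOne) (hrep : N.Represents t d) {a b c w : X}
    (ht : d.IsTricycle a b c) (ht2 : d.IsTricycle w a b) : False := by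
  obtain ⟨v, hv⟩ := exists_lca ({a, b, c} : Finset X) (N := N)
  obtain ⟨v', hv'⟩ := exists_lca ({w, a, b} : Finset X) (N := N)
  obtain ⟨hvyz, C, hCr, hah, hbh, hch⟩ := tric_struct hlv hrep ht hv
  obtain ⟨hnl1, hnl2⟩ := not_lca_pair hrep ht hv
  obtain ⟨hvyz', C', hCr', hwh', hah', hbh'⟩ := tric_struct hlv hrep ht2 hv'
  have hvC : v' ∈ C.verts := by
    refine lca_pair_in_verts hlv hah hbh ?_ ?_ ?_ v' hvyz'
    · rw [hCr]; exact hv.1 a (by simp)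
    · rw [hCr]; exact hv.1 b (by simp)
    · rw [hCr]; exact hnl1
  have hvC' : v' ∈ C'.verts := hCr' ▸ r_mem_verts C'
  obtain ⟨_, _, hheq⟩ := shared_vertex_eq hlv hvC hvC'
  exact hah' (hheq ▸ hah)

end Cores

section Final

open PhyloNetwork Relation

variable {X M : Type} [Fintype X] [DecidableEq X] [DecidableEq M]
variable {N : PhyloNetwork X} {t : N.V → M} {d : SymbolicDissim3 X M}

set_option linter.unusedSectionVars false

theorem inter_small {T T' : Finset X} {a : X} (hsub : T ∩ T' ⊆ {a})
    (hcard : (T ∩ T').card = 2) : False := by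
  have := Finset.card_le_card hsub
  simp [hcard] at this

theorem adj_eq (hlv : N.IsLevelOne) (hrep : N.Represents t d) {x y z x' y' z' : X}
    (ht : d.IsTricycle x y z) (ht' : d.IsTricycle x' y' z')
    (hcard : (({x, y, z} : Finset X) ∩ ({x', y', z'} : Finset X)).card = 2) :
    d.val {x, y, z} = d.val {x', y', z'} := by
  obtain ⟨hxy, hxz, hyz, -, -⟩ := id ht
  obtain ⟨hxy', hxz', hyz', -, -⟩ := id ht'
  by_cases hx'x : x' = x
  · by_cases hy'y : y' = y
    · have ht2 : d.IsTricycle x y z' := by rwa [hx'x, hy'y] at ht'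
      rw [show ({x', y', z'} : Finset X) = {x, y, z'} by rw [hx'x, hy'y]]
      exact core_B hlv hrep ht ht2
    by_cases hy'z : y' = z
    · have ht2 : d.IsTricycle x z z' := by rwa [hx'x, hy'z] at ht'
      rw [show ({x', y', z'} : Finset X) = {x, z, z'} by rw [hx'x, hy'z],
        show ({x, y, z} : Finset X) = {x, z, y} by ext u; simp; tauto]
      exact core_B hlv hrep (tric_swap ht) ht2
    by_cases hz'y : z' = y
    · have ht2 : d.IsTricycle x y y' := tric_swap (by rwa [hx'x, hz'y] at ht')
      rw [show ({x', y', z'} : Finset X) = {x, y, y'} by rw [hx'x, hz'y]; ext u; simp; tauto]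
      exact core_B hlv hrep ht ht2
    by_cases hz'z : z' = z
    · have ht2 : d.IsTricycle x z y' := tric_swap (by rwa [hx'x, hz'z] at ht')
      rw [show ({x', y', z'} : Finset X) = {x, z, y'} by rw [hx'x, hz'z]; ext u; simp; tauto,
        show ({x, y, z} : Finset X) = {x, z, y} by ext u; simp; tauto]
      exact core_B hlv hrep (tric_swap ht) ht2
    · exfalso
      refine inter_small (a := x) ?_ hcard
      intro u hu
      simp only [Finset.mem_inter, Finset.mem_insert, Finset.mem_singleton] at hu ⊢
      obtain ⟨h1, h2⟩ := hu
      rcases h2 with rfl | rfl | rfl <;> rcases h1 with rfl | rfl | rfl <;> simp_all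
  by_cases hx'y : x' = y
  · exfalso
    by_cases hy'x : y' = x
    · exact core_C hlv hrep ht (by rwa [hx'y, hy'x] at ht')
    by_cases hz'x : z' = x
    · exact core_C hlv hrep ht (tric_swap (by rwa [hx'y, hz'x] at ht'))
    by_cases hy'z : y' = z
    · exact core_E hlv hrep ht (by rwa [hx'y, hy'z] at ht')
    by_cases hz'z : z' = z
    · exact core_E hlv hrep ht (tric_swap (by rwa [hx'y, hz'z] at ht'))
    · refine inter_small (a := y) ?_ hcard
      intro u hu
      simp only [Finset.mem_inter, Finset.mem_insert, Finset.mem_singleton] at hu ⊢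
      obtain ⟨h1, h2⟩ := hu
      rcases h2 with rfl | rfl | rfl <;> rcases h1 with rfl | rfl | rfl <;> simp_all
  by_cases hx'z : x' = z
  · exfalso
    by_cases hy'x : y' = x
    · exact core_C hlv hrep (tric_swap ht) (by rwa [hx'z, hy'x] at ht')
    by_cases hz'x : z' = x
    · exact core_C hlv hrep (tric_swap ht) (tric_swap (by rwa [hx'z, hz'x] at ht'))
    by_cases hy'y : y' = y
    · exact core_E hlv hrep (tric_swap ht) (by rwa [hx'z, hy'y] at ht')
    by_cases hz'y : z' = y
    · exact core_E hlv hrep (tric_swap ht) (tric_swap (by rwa [hx'z, hz'y] at ht'))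
    · refine inter_small (a := z) ?_ hcard
      intro u hu
      simp only [Finset.mem_inter, Finset.mem_insert, Finset.mem_singleton] at hu ⊢
      obtain ⟨h1, h2⟩ := hu
      rcases h2 with rfl | rfl | rfl <;> rcases h1 with rfl | rfl | rfl <;> simp_all
  -- x' is a new leaf
  · by_cases hy'x : y' = x
    · exfalso
      by_cases hz'y : z' = y
      · exact core_D hlv hrep ht (by rwa [hy'x, hz'y] at ht')
      by_cases hz'z : z' = z
      · exact core_D hlv hrep (tric_swap ht) (by rwa [hy'x, hz'z] at ht')
      · refine inter_small (a := x) ?_ hcard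
        intro u hu
        simp only [Finset.mem_inter, Finset.mem_insert, Finset.mem_singleton] at hu ⊢
        obtain ⟨h1, h2⟩ := hu
        rcases h2 with rfl | rfl | rfl <;> rcases h1 with rfl | rfl | rfl <;> simp_all
    by_cases hy'y : y' = y
    · by_cases hz'z : z' = z
      · have ht2 : d.IsTricycle x' y z := by rwa [hy'y, hz'z] at ht'
        rw [show ({x', y', z'} : Finset X) = {x', y, z} by rw [hy'y, hz'z]]
        exact core_A ht ht2
      by_cases hz'x : z' = x
      · exact absurd (core_D hlv hrep ht (tric_swap (by rwa [hy'y, hz'x] at ht'))) id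
      · exfalso
        refine inter_small (a := y) ?_ hcard
        intro u hu
        simp only [Finset.mem_inter, Finset.mem_insert, Finset.mem_singleton] at hu ⊢
        obtain ⟨h1, h2⟩ := hu
        rcases h2 with rfl | rfl | rfl <;> rcases h1 with rfl | rfl | rfl <;> simp_all
    by_cases hy'z : y' = z
    · by_cases hz'y : z' = y
      · have ht2 : d.IsTricycle x' y z := tric_swap (by rwa [hy'z, hz'y] at ht')
        rw [show ({x', y', z'} : Finset X) = {x', y, z} by rw [hy'z, hz'y]; ext u; simp; tauto]
        exact core_A ht ht2
      by_cases hz'x : z' = x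
      · exact absurd (core_D hlv hrep (tric_swap ht) (tric_swap (by rwa [hy'z, hz'x] at ht'))) id
      · exfalso
        refine inter_small (a := z) ?_ hcard
        intro u hu
        simp only [Finset.mem_inter, Finset.mem_insert, Finset.mem_singleton] at hu ⊢
        obtain ⟨h1, h2⟩ := hu
        rcases h2 with rfl | rfl | rfl <;> rcases h1 with rfl | rfl | rfl <;> simp_all
    · exfalso
      refine inter_small (a := z') ?_ hcard
      intro u hu
      simp only [Finset.mem_inter, Finset.mem_insert, Finset.mem_singleton] at hu ⊢
      obtain ⟨h1, h2⟩ := hu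
      rcases h2 with rfl | rfl | rfl <;> rcases h1 with rfl | rfl | rfl <;> simp_all

end Final
/-- A level-1 representable symbolic 3-dissimilarity satisfies Property (P3):
any two `δ`-tricycles in the same connected component of `C(δ)` have the same
`δ`-value on their leaf sets. -/
theorem propP3_of_levelOneRepresentable {X M : Type}
    [Fintype X] [DecidableEq X] [Fintype M] [DecidableEq M]
    (d : SymbolicDissim3 X M) (hrep : d.LevelOneRepresentable) :
    d.PropP3 := by
  obtain ⟨N, t, hlv, hr⟩ := hrep
  intro τ τ' hchain
  induction hchain with
  | refl => rfl
  | @tail b c hrest hadj ih =>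
    exact ih.trans (adj_eq hlv hr b.isTricycle c.isTricycle hadj)
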